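/- Define V : ℝ → ℝ by V(x) = x for x > 0 and V(x) = 0 for x ≤ 0. Then the principal-value integral H(V)(x) = −(1/π) p.v. ∫_ℝ [x(x−1)/(ζ(ζ−1)(ζ−x))] V(ζ) dζ exists for every x ∈ ℝ \ {0,1} and equals (1/π) x log|x|. -/

import Mathlib

open Filter MeasureTheory Real Set
open Topology

namespace HilbertShearAux2

/-- integrand -/
noncomputable def f (x ζ : ℝ) : ℝ :=
  x * (x - 1) / (ζ * (ζ - 1) * (ζ - x)) * (if 0 < ζ then ζ else 0)

/-- simplified integrand on the positive axis -/
noncomputable def g (x ζ : ℝ) : ℝ := x * (x - 1) / ((ζ - 1) * (ζ - x))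

/-- antiderivative of `g x` -/
noncomputable def F (x t : ℝ) : ℝ := x * (Real.log (t - x) - Real.log (t - 1))

lemma fg (x : ℝ) {ζ : ℝ} (hζ : 0 < ζ) : f x ζ = g x ζ := by
  unfold f g
  rw [if_pos hζ, div_mul_eq_mul_div,
    show x * (x - 1) * ζ = ζ * (x * (x - 1)) by ring,
    show ζ * (ζ - 1) * (ζ - x) = ζ * ((ζ - 1) * (ζ - x)) by ring,
    mul_div_mul_left _ _ (ne_of_gt hζ)]

lemma hasDerivAt_F (x : ℝ) {ζ : ℝ} (hζx : ζ ≠ x) (hζ1 : ζ ≠ 1) :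
    HasDerivAt (F x) (g x ζ) ζ := by
  have h1 : HasDerivAt (fun t : ℝ => Real.log (t - x)) (1 / (ζ - x)) ζ := by
    simpa using ((hasDerivAt_id ζ).sub_const x).log (sub_ne_zero.2 hζx)
  have h2 : HasDerivAt (fun t : ℝ => Real.log (t - 1)) (1 / (ζ - 1)) ζ := by
    simpa using ((hasDerivAt_id ζ).sub_const 1).log (sub_ne_zero.2 hζ1)
  have h := (h1.sub h2).const_mul x
  refine h.congr_deriv (Eq.symm ?_)
  have e1 : ζ - x ≠ 0 := sub_ne_zero.2 hζx
  have e2 : ζ - 1 ≠ 0 := sub_ne_zero.2 hζ1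
  unfold g
  rw [div_sub_div _ _ e1 e2, show (1:ℝ)*(ζ-1) - (ζ-x)*1 = x - 1 by ring,
    show (ζ-x)*(ζ-1) = (ζ-1)*(ζ-x) by ring, mul_div_assoc]

lemma continuousOn_g (x : ℝ) {s : Set ℝ} (h : ∀ ζ ∈ s, ζ ≠ x ∧ ζ ≠ 1) :
    ContinuousOn (g x) s := by
  apply continuousOn_const.div (by fun_prop)
  exact fun ζ hζ => mul_ne_zero (sub_ne_zero.2 (h ζ hζ).2) (sub_ne_zero.2 (h ζ hζ).1)

lemma integral_g_Ioo (x a b : ℝ) (hab : a ≤ b) (h : ∀ ζ ∈ Icc a b, ζ ≠ x ∧ ζ ≠ 1) :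
    ∫ ζ in Ioo a b, g x ζ = F x b - F x a := by
  rw [← integral_Ioc_eq_integral_Ioo, ← intervalIntegral.integral_of_le hab]
  apply intervalIntegral.integral_eq_sub_of_hasDerivAt
  · intro t ht
    rw [uIcc_of_le hab] at ht
    exact hasDerivAt_F x (h t ht).1 (h t ht).2
  · apply (continuousOn_g x ?_).intervalIntegrable
    rw [uIcc_of_le hab]; exact h

lemma tendsto_logdiff (x : ℝ) :
    Tendsto (fun t : ℝ => Real.log (t - x) - Real.log (t - 1)) atTop (𝓝 0) := by
  have hsub : Tendsto (fun t : ℝ => t - 1) atTop atTop :=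
    (tendsto_atTop_add_const_right atTop (-1) tendsto_id).congr
      (fun t => by simp [sub_eq_add_neg])
  have h0 : Tendsto (fun t : ℝ => (t - 1)⁻¹) atTop (𝓝 0) :=
    tendsto_inv_atTop_zero.comp hsub
  have h1 : Tendsto (fun t : ℝ => 1 + (1 - x) * (t - 1)⁻¹) atTop (𝓝 1) := by
    simpa using (h0.const_mul (1 - x)).const_add 1
  have h2 : Tendsto (fun t : ℝ => Real.log (1 + (1 - x) * (t - 1)⁻¹)) atTop (𝓝 0) := by
    have := (Real.continuousAt_log (by norm_num : (1:ℝ) ≠ 0)).tendsto.comp h1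
    simpa [Function.comp_def] using this
  apply h2.congr'
  filter_upwards [Ioi_mem_atTop (max x 1)] with t ht
  have htx : 0 < t - x := by
    have := (le_max_left x 1).trans_lt (mem_Ioi.1 ht); linarith
  have ht1 : 0 < t - 1 := by
    have := (le_max_right x 1).trans_lt (mem_Ioi.1 ht); linarith
  have e : 1 + (1 - x) * (t - 1)⁻¹ = (t - x) / (t - 1) := by
    field_simp
    ring
  rw [e, Real.log_div htx.ne' ht1.ne']

lemma tendsto_F (x : ℝ) : Tendsto (F x) atTop (𝓝 0) := by
  have := (tendsto_logdiff x).const_mul x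
  show Tendsto (fun t => x * (Real.log (t - x) - Real.log (t - 1))) atTop (𝓝 0)
  simpa using this

lemma integrable_g_Ioi (x a : ℝ) (hx1 : x ≠ 1) (h1a : 1 < a) (hxa : x < a) :
    IntegrableOn (g x) (Ioi a) := by
  set h : ℝ → ℝ := fun ζ => ((ζ - 1) * (ζ - x))⁻¹ with hh
  set G : ℝ → ℝ := fun t => (x - 1)⁻¹ * (Real.log (t - x) - Real.log (t - 1)) with hG
  have hGd : ∀ ζ : ℝ, ζ ≠ x → ζ ≠ 1 → HasDerivAt G (h ζ) ζ := by
    intro ζ hζx hζ1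
    have h1 : HasDerivAt (fun t : ℝ => Real.log (t - x)) (1 / (ζ - x)) ζ := by
      simpa using ((hasDerivAt_id ζ).sub_const x).log (sub_ne_zero.2 hζx)
    have h2 : HasDerivAt (fun t : ℝ => Real.log (t - 1)) (1 / (ζ - 1)) ζ := by
      simpa using ((hasDerivAt_id ζ).sub_const 1).log (sub_ne_zero.2 hζ1)
    have hd := (h1.sub h2).const_mul ((x - 1)⁻¹)
    refine hd.congr_deriv (Eq.symm ?_)
    have e1 : ζ - x ≠ 0 := sub_ne_zero.2 hζx
    have e2 : ζ - 1 ≠ 0 := sub_ne_zero.2 hζ1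
    have e3 : x - 1 ≠ 0 := sub_ne_zero.2 hx1
    show ((ζ - 1) * (ζ - x))⁻¹ = (x-1)⁻¹ * (1 / (ζ - x) - 1 / (ζ - 1))
    rw [div_sub_div _ _ e1 e2, show (1:ℝ)*(ζ-1) - (ζ-x)*1 = x - 1 by ring]
    rw [← mul_div_assoc, inv_mul_cancel₀ e3, one_div, mul_comm (ζ-x)]
  have hpos : ∀ ζ ∈ Ioi a, 0 ≤ h ζ := by
    intro ζ hζ
    have := mem_Ioi.1 hζ
    have : (0:ℝ) ≤ (ζ - 1) * (ζ - x) := by nlinarith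
    simpa [hh] using inv_nonneg.2 this
  have htop : Tendsto G atTop (𝓝 0) := by
    simpa using (tendsto_logdiff x).const_mul ((x - 1)⁻¹)
  have hint : IntegrableOn h (Ioi a) :=
    integrableOn_Ioi_deriv_of_nonneg
      ((hGd a hxa.ne' h1a.ne').continuousAt.continuousWithinAt)
      (fun ζ hζ => hGd ζ (by rintro rfl; exact absurd (mem_Ioi.1 hζ) (not_lt.2 hxa.le))
        (by rintro rfl; exact absurd (mem_Ioi.1 hζ) (not_lt.2 h1a.le)))
      hpos htop
  have := hint.const_mul (x * (x - 1))
  apply IntegrableOn.congr_fun this _ measurableSet_Ioi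
  intro ζ _
  simp [hh, g, div_eq_mul_inv]

lemma integral_g_Ioi (x a : ℝ) (hx1 : x ≠ 1) (h1a : 1 < a) (hxa : x < a) :
    ∫ ζ in Ioi a, g x ζ = -F x a := by
  have := integral_Ioi_of_hasDerivAt_of_tendsto
    ((hasDerivAt_F x hxa.ne' h1a.ne').continuousAt.continuousWithinAt)
    (fun ζ hζ => hasDerivAt_F x
      (by rintro rfl; exact absurd (mem_Ioi.1 hζ) (not_lt.2 hxa.le))
      (by rintro rfl; exact absurd (mem_Ioi.1 hζ) (not_lt.2 h1a.le)))
    (integrable_g_Ioi x a hx1 h1a hxa) (tendsto_F x)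
  rw [this, zero_sub]


lemma main_pos (x m M : ℝ) (hx1 : x ≠ 1)
    (h0m : 0 < m) (hmM : m < M) (hxM : x ≤ M) (h1M : 1 ≤ M)
    (hiff : ∀ ζ ε : ℝ, (ε < |ζ - x| ∧ ε < |ζ - 1|) ↔ (ε < |ζ - m| ∧ ε < |ζ - M|))
    (hne : ∀ ζ : ℝ, ζ ≠ m → ζ ≠ M → ζ ≠ x ∧ ζ ≠ 1)
    (c : ℝ) (hFc : ∀ t : ℝ, F x t = c * (Real.log (t - m) - Real.log (t - M)))
    (hF0 : F x 0 = x * Real.log |x|) :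
    Tendsto (fun ε : ℝ => ∫ ζ in {ζ : ℝ | ε < |ζ - x| ∧ ε < |ζ - 1|}, f x ζ)
      (𝓝[>] 0) (𝓝 (-(x * Real.log |x|))) := by
  set δ := min m ((M - m) / 2) with hδdef
  have hδ0 : 0 < δ := lt_min h0m (by linarith)
  have key : ∀ ε ∈ Ioo (0:ℝ) δ,
      (∫ ζ in {ζ : ℝ | ε < |ζ - x| ∧ ε < |ζ - 1|}, f x ζ) =
      c * (Real.log (M - ε - m) + Real.log (m + ε - M)
        - Real.log (m - ε - M) - Real.log (M + ε - m)) - F x 0 := by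
    rintro ε ⟨hε0, hεδ⟩
    have hεm : ε < m := hεδ.trans_le (min_le_left _ _)
    have hε2 : ε < (M - m) / 2 := hεδ.trans_le (min_le_right _ _)
    set S := {ζ : ℝ | ε < |ζ - x| ∧ ε < |ζ - 1|} with hSdef
    set A := Ioo (0:ℝ) (m - ε) with hAdef
    set B := Ioo (m + ε) (M - ε) with hBdef
    set C := Ioi (M + ε) with hCdef
    have hU : A ∪ (B ∪ C) = S ∩ Ioi 0 := by
      ext ζ
      simp only [hAdef, hBdef, hCdef, hSdef, mem_union, mem_Ioo, mem_Ioi,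
        mem_inter_iff, mem_setOf_eq]
      rw [hiff ζ ε]
      simp only [lt_abs]
      constructor
      · rintro (⟨h1, h2⟩ | ⟨h1, h2⟩ | h1)
        · exact ⟨⟨Or.inr (by linarith), Or.inr (by linarith)⟩, h1⟩
        · exact ⟨⟨Or.inl (by linarith), Or.inr (by linarith)⟩, by linarith⟩
        · exact ⟨⟨Or.inl (by linarith), Or.inl (by linarith)⟩, by linarith⟩
      · rintro ⟨⟨h1 | h1, h2 | h2⟩, h0⟩
        · right; right; linarith
        · right; left; exact ⟨by linarith, by linarith⟩
        · linarith
        · left; exact ⟨h0, by linarith⟩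
    have hSopen : IsOpen S := by
      have : S = ((fun ζ : ℝ => |ζ - x|) ⁻¹' Ioi ε) ∩ ((fun ζ : ℝ => |ζ - 1|) ⁻¹' Ioi ε) := rfl
      rw [this]
      exact (isOpen_Ioi.preimage (by fun_prop)).inter (isOpen_Ioi.preimage (by fun_prop))
    have hA : ∀ ζ ∈ Icc (0:ℝ) (m - ε), ζ ≠ x ∧ ζ ≠ 1 := by
      intro ζ hζ
      exact hne ζ (by rintro rfl; linarith [hζ.2]) (by rintro rfl; linarith [hζ.2])
    have hB : ∀ ζ ∈ Icc (m + ε) (M - ε), ζ ≠ x ∧ ζ ≠ 1 := by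
      intro ζ hζ
      exact hne ζ (by rintro rfl; linarith [hζ.1]) (by rintro rfl; linarith [hζ.2])
    have hiA : IntegrableOn (f x) A := by
      apply IntegrableOn.congr_fun
        (((continuousOn_g x hA).integrableOn_Icc).mono_set Ioo_subset_Icc_self)
        _ measurableSet_Ioo
      exact fun ζ hζ => (fg x hζ.1).symm
    have hiB : IntegrableOn (f x) B := by
      apply IntegrableOn.congr_fun
        (((continuousOn_g x hB).integrableOn_Icc).mono_set Ioo_subset_Icc_self)
        _ measurableSet_Ioo
      exact fun ζ hζ => (fg x (by have := hζ.1; simp only [hBdef, mem_Ioo] at hζ; linarith [hζ.1])).symm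
    have hiC : IntegrableOn (f x) C := by
      apply IntegrableOn.congr_fun (integrable_g_Ioi x (M + ε) hx1 (by linarith) (by linarith))
        _ measurableSet_Ioi
      exact fun ζ hζ => (fg x (by have := mem_Ioi.1 hζ; linarith)).symm
    have step1 : (∫ ζ in S, f x ζ) = ∫ ζ in A ∪ (B ∪ C), f x ζ := by
      refine setIntegral_eq_of_subset_of_ae_diff_eq_zero
        hSopen.measurableSet.nullMeasurableSet ?_ ?_
      · rw [hU]; exact inter_subset_left
      · refine Eventually.of_forall (fun ζ hζ => ?_)
        have h0 : ¬ (0 < ζ) := by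
          intro h
          have : ζ ∈ S ∩ Ioi 0 := ⟨hζ.1, h⟩
          rw [← hU] at this
          exact hζ.2 this
        simp [f, h0]
    have hd2 : Disjoint B C := by
      rw [disjoint_left]
      rintro ζ ⟨_, h2⟩ h3
      have := mem_Ioi.1 h3
      linarith
    have hd1 : Disjoint A (B ∪ C) := by
      rw [disjoint_union_right]
      constructor <;> (rw [disjoint_left]; rintro ζ ⟨_, h2⟩ h3)
      · have := (mem_Ioo.1 h3).1; linarith
      · have := mem_Ioi.1 h3; linarith
    have step2 : (∫ ζ in A ∪ (B ∪ C), f x ζ)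
        = (∫ ζ in A, f x ζ) + ((∫ ζ in B, f x ζ) + (∫ ζ in C, f x ζ)) := by
      rw [setIntegral_union hd1 (measurableSet_Ioo.union measurableSet_Ioi) hiA (hiB.union hiC),
        setIntegral_union hd2 measurableSet_Ioi hiB hiC]
    have vA : (∫ ζ in A, f x ζ) = F x (m - ε) - F x 0 := by
      rw [setIntegral_congr_fun measurableSet_Ioo (fun ζ hζ => fg x hζ.1)]
      exact integral_g_Ioo x 0 (m - ε) (by linarith) hA
    have vB : (∫ ζ in B, f x ζ) = F x (M - ε) - F x (m + ε) := by
      rw [setIntegral_congr_fun measurableSet_Ioo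
        (fun ζ hζ => fg x (by have := (mem_Ioo.1 hζ).1; linarith))]
      exact integral_g_Ioo x (m + ε) (M - ε) (by linarith) hB
    have vC : (∫ ζ in C, f x ζ) = -F x (M + ε) := by
      rw [setIntegral_congr_fun measurableSet_Ioi
        (fun ζ hζ => fg x (by have := mem_Ioi.1 hζ; linarith))]
      exact integral_g_Ioi x (M + ε) hx1 (by linarith) (by linarith)
    rw [step1, step2, vA, vB, vC, hFc (m - ε), hFc (M - ε), hFc (m + ε), hFc (M + ε),
      show m - ε - m = -ε by ring, show M - ε - M = -ε by ring,
      show m + ε - m = ε by ring, show M + ε - M = ε by ring]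
    ring
  have hMm : M - (0:ℝ) - m ≠ 0 := by simp only [sub_zero]; exact sub_ne_zero.2 hmM.ne'
  have hmM' : m + (0:ℝ) - M ≠ 0 := by simp only [add_zero]; exact sub_ne_zero.2 hmM.ne
  have hmM'' : m - (0:ℝ) - M ≠ 0 := by simp only [sub_zero]; exact sub_ne_zero.2 hmM.ne
  have hMm' : M + (0:ℝ) - m ≠ 0 := by simp only [add_zero]; exact sub_ne_zero.2 hmM.ne'
  have hcontC : ContinuousAt (fun ε : ℝ =>
      c * (Real.log (M - ε - m) + Real.log (m + ε - M)
        - Real.log (m - ε - M) - Real.log (M + ε - m)) - F x 0) 0 := by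
    have c1 : ContinuousAt (fun ε : ℝ => Real.log (M - ε - m)) 0 := by
      exact ContinuousAt.comp (f := fun ε : ℝ => M - ε - m)
        (Real.continuousAt_log hMm) (by fun_prop)
    have c2 : ContinuousAt (fun ε : ℝ => Real.log (m + ε - M)) 0 := by
      exact ContinuousAt.comp (f := fun ε : ℝ => m + ε - M)
        (Real.continuousAt_log hmM') (by fun_prop)
    have c3 : ContinuousAt (fun ε : ℝ => Real.log (m - ε - M)) 0 := by
      exact ContinuousAt.comp (f := fun ε : ℝ => m - ε - M)
        (Real.continuousAt_log hmM'') (by fun_prop)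
    have c4 : ContinuousAt (fun ε : ℝ => Real.log (M + ε - m)) 0 := by
      exact ContinuousAt.comp (f := fun ε : ℝ => M + ε - m)
        (Real.continuousAt_log hMm') (by fun_prop)
    exact ((((c1.add c2).sub c3).sub c4).const_mul c).sub continuousAt_const
  have hlim : Tendsto (fun ε : ℝ =>
      c * (Real.log (M - ε - m) + Real.log (m + ε - M)
        - Real.log (m - ε - M) - Real.log (M + ε - m)) - F x 0)
      (𝓝[>] 0) (𝓝 (-(x * Real.log |x|))) := by
    have := hcontC.tendsto.mono_left (nhdsWithin_le_nhds (s := Ioi (0:ℝ)))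
    have hv : c * (Real.log (M - 0 - m) + Real.log (m + 0 - M)
        - Real.log (m - 0 - M) - Real.log (M + 0 - m)) - F x 0 = -(x * Real.log |x|) := by
      simp only [sub_zero, add_zero]
      rw [hF0]; ring
    rwa [hv] at this
  apply hlim.congr'
  filter_upwards [Ioo_mem_nhdsGT_of_mem (⟨le_refl 0, hδ0⟩ : (0:ℝ) ∈ Ico 0 δ)] with ε hε
  exact (key ε hε).symm

lemma main_neg (x : ℝ) (hx : x < 0) (hx1 : x ≠ 1)
    (hF0 : F x 0 = x * Real.log |x|) :
    Tendsto (fun ε : ℝ => ∫ ζ in {ζ : ℝ | ε < |ζ - x| ∧ ε < |ζ - 1|}, f x ζ)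
      (𝓝[>] 0) (𝓝 (-(x * Real.log |x|))) := by
  set δ := min (-x) 1 with hδdef
  have hδ0 : 0 < δ := lt_min (by linarith) one_pos
  have key : ∀ ε ∈ Ioo (0:ℝ) δ,
      (∫ ζ in {ζ : ℝ | ε < |ζ - x| ∧ ε < |ζ - 1|}, f x ζ) =
      x * (Real.log (1 - ε - x) - Real.log (1 + ε - x)) - F x 0 := by
    rintro ε ⟨hε0, hεδ⟩
    have hεx : ε < -x := hεδ.trans_le (min_le_left _ _)
    have hε1 : ε < 1 := hεδ.trans_le (min_le_right _ _)
    set S := {ζ : ℝ | ε < |ζ - x| ∧ ε < |ζ - 1|} with hSdef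
    set A := Ioo (0:ℝ) (1 - ε) with hAdef
    set C := Ioi (1 + ε) with hCdef
    have hU : A ∪ C = S ∩ Ioi 0 := by
      ext ζ
      simp only [hAdef, hCdef, hSdef, mem_union, mem_Ioo, mem_Ioi,
        mem_inter_iff, mem_setOf_eq, lt_abs]
      constructor
      · rintro (⟨h1, h2⟩ | h1)
        · exact ⟨⟨Or.inl (by linarith), Or.inr (by linarith)⟩, h1⟩
        · exact ⟨⟨Or.inl (by linarith), Or.inl (by linarith)⟩, by linarith⟩
      · rintro ⟨⟨h1 | h1, h2 | h2⟩, h0⟩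
        · right; linarith
        · left; exact ⟨h0, by linarith⟩
        · linarith
        · linarith
    have hSopen : IsOpen S := by
      have : S = ((fun ζ : ℝ => |ζ - x|) ⁻¹' Ioi ε) ∩ ((fun ζ : ℝ => |ζ - 1|) ⁻¹' Ioi ε) := rfl
      rw [this]
      exact (isOpen_Ioi.preimage (by fun_prop)).inter (isOpen_Ioi.preimage (by fun_prop))
    have hA : ∀ ζ ∈ Icc (0:ℝ) (1 - ε), ζ ≠ x ∧ ζ ≠ 1 := by
      intro ζ hζ
      exact ⟨by rintro rfl; linarith [hζ.1], by rintro rfl; linarith [hζ.2]⟩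
    have hiA : IntegrableOn (f x) A := by
      apply IntegrableOn.congr_fun
        (((continuousOn_g x hA).integrableOn_Icc).mono_set Ioo_subset_Icc_self)
        _ measurableSet_Ioo
      exact fun ζ hζ => (fg x hζ.1).symm
    have hiC : IntegrableOn (f x) C := by
      apply IntegrableOn.congr_fun (integrable_g_Ioi x (1 + ε) hx1 (by linarith) (by linarith))
        _ measurableSet_Ioi
      exact fun ζ hζ => (fg x (by have := mem_Ioi.1 hζ; linarith)).symm
    have step1 : (∫ ζ in S, f x ζ) = ∫ ζ in A ∪ C, f x ζ := by
      refine setIntegral_eq_of_subset_of_ae_diff_eq_zero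
        hSopen.measurableSet.nullMeasurableSet ?_ ?_
      · rw [hU]; exact inter_subset_left
      · refine Eventually.of_forall (fun ζ hζ => ?_)
        have h0 : ¬ (0 < ζ) := by
          intro h
          have : ζ ∈ S ∩ Ioi 0 := ⟨hζ.1, h⟩
          rw [← hU] at this
          exact hζ.2 this
        simp [f, h0]
    have hd1 : Disjoint A C := by
      rw [disjoint_left]
      rintro ζ ⟨_, h2⟩ h3
      have := mem_Ioi.1 h3
      linarith
    have step2 : (∫ ζ in A ∪ C, f x ζ) = (∫ ζ in A, f x ζ) + (∫ ζ in C, f x ζ) :=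
      setIntegral_union hd1 measurableSet_Ioi hiA hiC
    have vA : (∫ ζ in A, f x ζ) = F x (1 - ε) - F x 0 := by
      rw [setIntegral_congr_fun measurableSet_Ioo (fun ζ hζ => fg x hζ.1)]
      exact integral_g_Ioo x 0 (1 - ε) (by linarith) hA
    have vC : (∫ ζ in C, f x ζ) = -F x (1 + ε) := by
      rw [setIntegral_congr_fun measurableSet_Ioi
        (fun ζ hζ => fg x (by have := mem_Ioi.1 hζ; linarith))]
      exact integral_g_Ioi x (1 + ε) hx1 (by linarith) (by linarith)
    rw [step1, step2, vA, vC,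
      show F x (1 - ε) = x * (Real.log (1 - ε - x) - Real.log (1 - ε - 1)) from rfl,
      show F x (1 + ε) = x * (Real.log (1 + ε - x) - Real.log (1 + ε - 1)) from rfl,
      show (1:ℝ) - ε - 1 = -ε by ring, show (1:ℝ) + ε - 1 = ε by ring,
      Real.log_neg_eq_log ε]
    ring
  have h1x : (1:ℝ) - 0 - x ≠ 0 := by simp only [sub_zero]; intro h; linarith
  have h1x' : (1:ℝ) + 0 - x ≠ 0 := by simp only [add_zero]; intro h; linarith
  have hcontC : ContinuousAt (fun ε : ℝ =>
      x * (Real.log (1 - ε - x) - Real.log (1 + ε - x)) - F x 0) 0 := by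
    have c1 : ContinuousAt (fun ε : ℝ => Real.log (1 - ε - x)) 0 := by
      exact ContinuousAt.comp (f := fun ε : ℝ => 1 - ε - x)
        (Real.continuousAt_log h1x) (by fun_prop)
    have c2 : ContinuousAt (fun ε : ℝ => Real.log (1 + ε - x)) 0 := by
      exact ContinuousAt.comp (f := fun ε : ℝ => 1 + ε - x)
        (Real.continuousAt_log h1x') (by fun_prop)
    exact ((c1.sub c2).const_mul x).sub continuousAt_const
  have hlim : Tendsto (fun ε : ℝ =>
      x * (Real.log (1 - ε - x) - Real.log (1 + ε - x)) - F x 0)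
      (𝓝[>] 0) (𝓝 (-(x * Real.log |x|))) := by
    have := hcontC.tendsto.mono_left (nhdsWithin_le_nhds (s := Ioi (0:ℝ)))
    have hv : x * (Real.log (1 - 0 - x) - Real.log (1 + 0 - x)) - F x 0
        = -(x * Real.log |x|) := by
      simp only [sub_zero, add_zero]
      rw [hF0]; ring
    rwa [hv] at this
  apply hlim.congr'
  filter_upwards [Ioo_mem_nhdsGT_of_mem (⟨le_refl 0, hδ0⟩ : (0:ℝ) ∈ Ico 0 δ)] with ε hε
  exact (key ε hε).symm

end HilbertShearAux2

open HilbertShearAux2 in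
/-- The Hilbert transform of the elementary shear vector field for the geodesic `(0,∞)`:
for every `x ∉ {0,1}` the principal value integral
`−(1/π) p.v. ∫ x(x−1)/(ζ(ζ−1)(ζ−x)) V(ζ) dζ` exists and equals `(1/π) x log|x|`,
where `V(ζ) = ζ` for `ζ > 0` and `V(ζ) = 0` otherwise, and the principal value is
taken by removing symmetric `ε`-neighborhoods of the singularities `x` and `1`. -/
theorem hilbert_transform_elementary_shear_zero_infty
    (x : ℝ) (hx0 : x ≠ 0) (hx1 : x ≠ 1) :
    Tendsto
      (fun ε : ℝ =>
        -(1 / π) *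
          ∫ ζ in {ζ : ℝ | ε < |ζ - x| ∧ ε < |ζ - 1|},
            x * (x - 1) / (ζ * (ζ - 1) * (ζ - x)) * (if 0 < ζ then ζ else 0))
      (nhdsWithin 0 (Set.Ioi (0 : ℝ)))
      (nhds ((1 / π) * x * Real.log |x|)) := by
  have hF0 : F x 0 = x * Real.log |x| := by
    show x * (Real.log (0 - x) - Real.log (0 - 1)) = x * Real.log |x|
    rw [show (0:ℝ) - x = -x by ring, show (0:ℝ) - 1 = -1 by norm_num,
      Real.log_neg_eq_log x, Real.log_neg_eq_log 1, Real.log_one, Real.log_abs]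
    ring
  have hfinal : Tendsto
      (fun ε : ℝ => ∫ ζ in {ζ : ℝ | ε < |ζ - x| ∧ ε < |ζ - 1|}, f x ζ)
      (𝓝[>] 0) (𝓝 (-(x * Real.log |x|))) := by
    rcases lt_trichotomy x 0 with hx | hx | hx
    · exact main_neg x hx hx1 hF0
    · exact absurd hx hx0
    · rcases lt_or_gt_of_ne hx1 with hlt | hgt
      · exact main_pos x x 1 hx1 hx hlt hlt.le le_rfl
          (fun ζ ε => Iff.rfl) (fun ζ h1 h2 => ⟨h1, h2⟩) x (fun t => rfl) hF0
      · refine main_pos x 1 x hx1 one_pos hgt le_rfl hgt.le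
          (fun ζ ε => and_comm) (fun ζ h1 h2 => ⟨h2, h1⟩) (-x) (fun t => ?_) hF0
        show x * (Real.log (t - x) - Real.log (t - 1))
          = -x * (Real.log (t - 1) - Real.log (t - x))
        ring
  have h2 := hfinal.const_mul (-(1 / π))
  rw [show (1 / π) * x * Real.log |x| = -(1 / π) * -(x * Real.log |x|) by ring]
  exact h2
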